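/- Let P and Q be orthogonal projections on ℂ^d, let U be a unitary d×d complex matrix, and suppose there exists 0 ≤ ε < 1 such that |⟨η, Uξ⟩|² ≤ ε for all unit vectors ξ ∈ ker P and η ∈ ker Q. Then the positive semidefinite matrix P + U^† Q U has trivial kernel, i.e. it is positive definite and in particular has full rank d. -/

import Mathlib

open Matrix ComplexOrder

lemma proj_quad {d : ℕ} (P : Matrix (Fin d) (Fin d) ℂ) (hP : P.IsHermitian)
    (hP2 : P * P = P) (v : Fin d → ℂ) :
    star v ⬝ᵥ P.mulVec v = star (P.mulVec v) ⬝ᵥ (P.mulVec v) := by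
  rw [star_mulVec, dotProduct_mulVec (star v ᵥ* Pᴴ), vecMul_vecMul,
    ← dotProduct_mulVec, hP.eq, hP2]

theorem stmt17 (d : ℕ) (P Q : Matrix (Fin d) (Fin d) ℂ)
    (hP : P.IsHermitian) (hP2 : P * P = P)
    (hQ : Q.IsHermitian) (hQ2 : Q * Q = Q)
    (U : Matrix (Fin d) (Fin d) ℂ) (hU : U ∈ Matrix.unitaryGroup (Fin d) ℂ)
    (ε : ℝ) (hε0 : 0 ≤ ε) (hε1 : ε < 1)
    (hacc : ∀ ξ η : Fin d → ℂ, P.mulVec ξ = 0 → Q.mulVec η = 0 →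
      star ξ ⬝ᵥ ξ = 1 → star η ⬝ᵥ η = 1 →
      ‖star η ⬝ᵥ U.mulVec ξ‖ ^ 2 ≤ ε) :
    (∀ v : Fin d → ℂ, (P + Uᴴ * Q * U).mulVec v = 0 → v = 0) ∧
    (P + Uᴴ * Q * U).PosDef ∧
    (P + Uᴴ * Q * U).rank = d := by
  have hUU : Uᴴ * U = 1 := hU.1
  -- quadratic form decomposition
  have quad : ∀ v : Fin d → ℂ,
      star v ⬝ᵥ (P + Uᴴ * Q * U).mulVec v
        = star (P.mulVec v) ⬝ᵥ (P.mulVec v)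
          + star (Q.mulVec (U.mulVec v)) ⬝ᵥ (Q.mulVec (U.mulVec v)) := by
    intro v
    rw [add_mulVec, dotProduct_add, proj_quad P hP hP2]
    congr 1
    rw [← mulVec_mulVec, ← mulVec_mulVec, ← proj_quad Q hQ hQ2,
      dotProduct_mulVec (star v) Uᴴ, ← star_mulVec]
  -- key: Pv = 0 and Q(Uv) = 0 imply v = 0
  have key : ∀ v : Fin d → ℂ, P.mulVec v = 0 → Q.mulVec (U.mulVec v) = 0 → v = 0 := by
    intro v hPv hQv
    by_contra hv
    have hnU : star (U.mulVec v) ⬝ᵥ (U.mulVec v) = star v ⬝ᵥ v := by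
      rw [star_mulVec, dotProduct_mulVec, vecMul_vecMul, hUU, vecMul_one]
    set n : ℂ := star v ⬝ᵥ v with hn
    have hn0 : n ≠ 0 := fun h => hv (dotProduct_star_self_eq_zero.mp h)
    -- n is a positive real
    obtain ⟨r, hr0, hrn⟩ : ∃ r : ℝ, 0 < r ∧ n = (r : ℂ) := by
      have h1 : (0 : ℂ) ≤ n := dotProduct_star_self_nonneg v
      obtain ⟨hre, him⟩ := Complex.nonneg_iff.mp h1
      refine ⟨n.re, ?_, by apply Complex.ext <;> simp [← him]⟩
      rcases lt_or_eq_of_le hre with h | h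
      · exact h
      · refine absurd (?_ : n = 0) hn0
        apply Complex.ext <;> simp [← h, ← him]
    set c : ℂ := (((Real.sqrt r)⁻¹ : ℝ) : ℂ) with hc
    have hsr : (0:ℝ) < Real.sqrt r := Real.sqrt_pos.mpr hr0
    have hss : Real.sqrt r * Real.sqrt r = r := Real.mul_self_sqrt hr0.le
    have hcc : star c * c * n = 1 := by
      rw [hrn, hc, Complex.star_def, Complex.conj_ofReal]
      norm_cast
      field_simp
      rw [sq, hss]
    set ξ := c • v with hξ
    set η := c • U.mulVec v with hη
    have hPξ : P.mulVec ξ = 0 := by rw [hξ, mulVec_smul, hPv, smul_zero]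
    have hQη : Q.mulVec η = 0 := by rw [hη, mulVec_smul, hQv, smul_zero]
    have hξ1 : star ξ ⬝ᵥ ξ = 1 := by
      rw [hξ, star_smul, smul_dotProduct, dotProduct_smul, smul_eq_mul, smul_eq_mul, ← mul_assoc]
      exact hcc
    have hη1 : star η ⬝ᵥ η = 1 := by
      rw [hη, star_smul, smul_dotProduct, dotProduct_smul, smul_eq_mul, smul_eq_mul, ← mul_assoc,
        hnU]
      exact hcc
    have hin : star η ⬝ᵥ U.mulVec ξ = 1 := by
      rw [hξ, mulVec_smul, ← hη]
      exact hη1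
    have := hacc ξ η hPξ hQη hξ1 hη1
    rw [hin] at this
    simp at this
    linarith
  have hkernel : ∀ v : Fin d → ℂ, (P + Uᴴ * Q * U).mulVec v = 0 → v = 0 := by
    intro v hv
    have hq : star v ⬝ᵥ (P + Uᴴ * Q * U).mulVec v = 0 := by rw [hv, dotProduct_zero]
    rw [quad] at hq
    have ha := dotProduct_star_self_nonneg (P.mulVec v)
    have hb := dotProduct_star_self_nonneg (Q.mulVec (U.mulVec v))
    have ha0 : star (P.mulVec v) ⬝ᵥ (P.mulVec v) = 0 := by
      by_contra h
      have : (0:ℂ) < star (P.mulVec v) ⬝ᵥ (P.mulVec v) := lt_of_le_of_ne ha (Ne.symm h)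
      have : (0:ℂ) < star (P.mulVec v) ⬝ᵥ (P.mulVec v)
          + star (Q.mulVec (U.mulVec v)) ⬝ᵥ (Q.mulVec (U.mulVec v)) :=
        lt_add_of_lt_of_nonneg this hb
      exact absurd hq this.ne'
    have hb0 : star (Q.mulVec (U.mulVec v)) ⬝ᵥ (Q.mulVec (U.mulVec v)) = 0 := by
      rw [ha0, zero_add] at hq; exact hq
    exact key v (dotProduct_star_self_eq_zero.mp ha0)
      (dotProduct_star_self_eq_zero.mp hb0)
  have hHerm : (P + Uᴴ * Q * U).IsHermitian := by
    exact hP.add (Matrix.isHermitian_conjTranspose_mul_mul U hQ)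
  have hPD : (P + Uᴴ * Q * U).PosDef := by
    refine Matrix.PosDef.of_dotProduct_mulVec_pos hHerm fun x hx => ?_
    rw [quad]
    have ha := dotProduct_star_self_nonneg (P.mulVec x)
    have hb := dotProduct_star_self_nonneg (Q.mulVec (U.mulVec x))
    rcases lt_or_eq_of_le ha with h | h
    · exact lt_add_of_lt_of_nonneg h hb
    rcases lt_or_eq_of_le hb with h' | h'
    · exact add_pos_of_nonneg_of_pos ha h'
    exact absurd (key x (dotProduct_star_self_eq_zero.mp h.symm)
      (dotProduct_star_self_eq_zero.mp h'.symm)) hx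
  refine ⟨hkernel, hPD, ?_⟩
  simpa using (P + Uᴴ * Q * U).rank_of_isUnit hPD.isUnit
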